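/- Let H be a complex Hilbert space and let A : H → H be a bounded positive self-adjoint operator (a continuous linear map with A* = A and Re⟨Ax, x⟩ ≥ 0 for all x). Suppose φ ∈ H and Λ ≥ 0 satisfy ‖φ‖ ≤ Λ·‖Aφ‖. Then for every natural number t ≥ 0 and every k of the form k = 2^l with l = 0, 1, 2, …, one has ‖A^t φ‖ ≤ Λ^k·‖A^{k+t} φ‖; in particular ‖φ‖ ≤ Λ^k·‖A^k φ‖ for every such k. -/

import Mathlib

lemma sa_norm_sq_le {H : Type*} [NormedAddCommGroup H] [InnerProductSpace ℂ H] [CompleteSpace H]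
    (A : H →L[ℂ] H) (hsa : IsSelfAdjoint A) (x : H) :
    ‖A x‖ ^ 2 ≤ ‖A (A x)‖ * ‖x‖ := by
  have h1 : (inner ℂ (A x) (A x) : ℂ).re = ‖A x‖ ^ 2 := by
    exact_mod_cast inner_self_eq_norm_sq (𝕜 := ℂ) (A x)
  have hsym : (inner ℂ (A (A x)) x : ℂ) = inner ℂ (A x) (A x) := by
    have := (hsa.isSymmetric) (A x) x
    simpa using this
  have h2 : (inner ℂ (A (A x)) x : ℂ).re ≤ ‖(inner ℂ (A (A x)) x : ℂ)‖ :=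
    Complex.re_le_norm _
  have h3 : ‖(inner ℂ (A (A x)) x : ℂ)‖ ≤ ‖A (A x)‖ * ‖x‖ := norm_inner_le_norm _ _
  calc ‖A x‖ ^ 2 = (inner ℂ (A (A x)) x : ℂ).re := by rw [hsym, h1]
    _ ≤ ‖(inner ℂ (A (A x)) x : ℂ)‖ := h2
    _ ≤ ‖A (A x)‖ * ‖x‖ := h3

/-- If `A` is a bounded positive self-adjoint operator on a complex Hilbert
space, `Λ ≥ 0`, and `‖φ‖ ≤ Λ‖Aφ‖`, then for every `t ∈ ℕ` and every `k = 2^l`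
one has `‖A^t φ‖ ≤ Λ^k ‖A^{k+t} φ‖`; in particular `‖φ‖ ≤ Λ^k ‖A^k φ‖`. -/
theorem iterated_poincare {H : Type*} [NormedAddCommGroup H] [InnerProductSpace ℂ H]
    [CompleteSpace H] (A : H →L[ℂ] H)
    (hsa : IsSelfAdjoint A) (hpos : ∀ x : H, 0 ≤ (inner ℂ (A x) x : ℂ).re)
    (φ : H) (Λ : ℝ) (hΛ : 0 ≤ Λ) (hφ : ‖φ‖ ≤ Λ * ‖A φ‖) :
    (∀ t l : ℕ, ‖(A ^ t) φ‖ ≤ Λ ^ (2 ^ l) * ‖(A ^ (2 ^ l + t)) φ‖) ∧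
      (∀ l : ℕ, ‖φ‖ ≤ Λ ^ (2 ^ l) * ‖(A ^ (2 ^ l)) φ‖) := by
  -- ratio lemma: ‖A^n φ‖ ≤ Λ ‖A^(n+1) φ‖ for all n
  have happ : ∀ n : ℕ, (A ^ (n + 1)) φ = A ((A ^ n) φ) := by
    intro n
    rw [pow_succ']
    rfl
  have hratio : ∀ n : ℕ, ‖(A ^ n) φ‖ ≤ Λ * ‖(A ^ (n + 1)) φ‖ := by
    intro n
    induction n with
    | zero => simpa using hφ
    | succ n ih =>
      have hsq : ‖(A ^ (n + 1)) φ‖ ^ 2 ≤ ‖(A ^ (n + 2)) φ‖ * ‖(A ^ n) φ‖ := by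
        have := sa_norm_sq_le A hsa ((A ^ n) φ)
        rw [← happ n] at this
        have h2 : (A ^ (n + 2)) φ = A ((A ^ (n + 1)) φ) := happ (n + 1)
        rw [h2]
        simpa [happ n] using this
      rcases eq_or_lt_of_le (norm_nonneg ((A ^ (n + 1)) φ)) with h0 | h0
      · rw [← h0]
        positivity
      · nlinarith [norm_nonneg ((A ^ (n + 2)) φ), norm_nonneg ((A ^ n) φ)]
  have hmain : ∀ k t : ℕ, ‖(A ^ t) φ‖ ≤ Λ ^ k * ‖(A ^ (k + t)) φ‖ := by
    intro k
    induction k with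
    | zero => intro t; simp
    | succ k ih =>
      intro t
      calc ‖(A ^ t) φ‖ ≤ Λ ^ k * ‖(A ^ (k + t)) φ‖ := ih t
        _ ≤ Λ ^ k * (Λ * ‖(A ^ (k + t + 1)) φ‖) := by
            exact mul_le_mul_of_nonneg_left (hratio (k + t)) (by positivity)
        _ = Λ ^ (k + 1) * ‖(A ^ (k + 1 + t)) φ‖ := by ring_nf
  refine ⟨fun t l => hmain (2 ^ l) t, fun l => ?_⟩
  simpa using hmain (2 ^ l) 0
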